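/- Let $X_0, X_1$ be disjoint compact subsets of a symplectic manifold $M$ and $G \in C^\infty_c(M)$ with complete flow $g_t$. Suppose $F \in C^\infty_c(M)$ satisfies $F|_{X_0} \leq 0$ and $F|_{X_1} \geq 1$, and suppose there exist $x \in X_0 \cup X_1$ and $T \neq 0$ with: $x \in X_0$ and $g_T x \in X_1$, or $x \in X_1$ and $g_T x \in X_0$. Then $\|\{F, G\}\|_\infty \geq 1/|T|$. -/
import Mathlib


open Set

/-- The sup-norm (uniform norm) `‖f‖_∞ = sup_{x ∈ M} |f(x)|` of a function. -/
noncomputable def supNorm {M : Type*} (f : M → ℝ) : ℝ := ⨆ x, |f x|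

/-- An abstract model of a symplectic manifold `M`, recording the predicate of being a
smooth function on `M` and the Poisson bracket `{·,·}` on smooth functions, together with
its basic algebraic properties (ℝ-bilinearity, antisymmetry, and the Leibniz rule). -/
structure PoissonManifold (M : Type*) [TopologicalSpace M] where
  /-- `IsSmooth f` means `f ∈ C^∞(M)`. -/
  IsSmooth : (M → ℝ) → Prop
  /-- The Poisson bracket `{f, g}` associated to the symplectic form. -/
  bracket : (M → ℝ) → (M → ℝ) → M → ℝ
  isSmooth_continuous : ∀ {f}, IsSmooth f → Continuous f
  isSmooth_const : ∀ c : ℝ, IsSmooth (fun _ => c)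
  isSmooth_add : ∀ {f g}, IsSmooth f → IsSmooth g → IsSmooth (f + g)
  isSmooth_mul : ∀ {f g}, IsSmooth f → IsSmooth g → IsSmooth (f * g)
  isSmooth_smul : ∀ (c : ℝ) {f}, IsSmooth f → IsSmooth (c • f)
  isSmooth_bracket : ∀ {f g}, IsSmooth f → IsSmooth g → IsSmooth (bracket f g)
  bracket_add_left : ∀ f g h, bracket (f + g) h = bracket f h + bracket g h
  bracket_smul_left : ∀ (c : ℝ) f g, bracket (c • f) g = c • bracket f g
  bracket_antisymm : ∀ f g, bracket f g = - bracket g f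
  bracket_leibniz : ∀ f g h, bracket (f * g) h = f * bracket g h + g * bracket f h

/-- If the Hamiltonian flow `g` of `G` carries a point of `X₀` to `X₁`
(or vice versa) in time `T ≠ 0`, then any smooth compactly supported `F` with `F ≤ 0` on
`X₀` and `F ≥ 1` on `X₁` satisfies `‖{F,G}‖_∞ ≥ 1/|T|`. -/
theorem bracket_norm_ge_of_chord
    {M : Type*} [TopologicalSpace M] (P : PoissonManifold M)
    (X0 X1 : Set M) (hX0 : IsCompact X0) (hX1 : IsCompact X1) (hX : X0 ∩ X1 = ∅)
    (G : M → ℝ) (hG : P.IsSmooth G) (hGc : HasCompactSupport G)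
    (g : ℝ → M → M) (hg0 : ∀ x, g 0 x = x)
    (hgflow : ∀ (F : M → ℝ), P.IsSmooth F → ∀ (x : M) (t : ℝ),
      HasDerivAt (fun τ => F (g τ x)) (P.bracket F G (g t x)) t)
    (F : M → ℝ) (hF : P.IsSmooth F) (hFc : HasCompactSupport F)
    (hFX0 : ∀ x ∈ X0, F x ≤ 0) (hFX1 : ∀ x ∈ X1, 1 ≤ F x)
    (x : M) (T : ℝ) (hT : T ≠ 0)
    (hchord : (x ∈ X0 ∧ g T x ∈ X1) ∨ (x ∈ X1 ∧ g T x ∈ X0)) :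
    1 / |T| ≤ supNorm (P.bracket F G) := by
  set B : M → ℝ := P.bracket F G with hBdef
  have hBcont : Continuous B := P.isSmooth_continuous (P.isSmooth_bracket hF hG)
  -- the tsupport of F is nonempty
  have hz1 : ∃ z, z ∈ X1 := by
    rcases hchord with ⟨_, h⟩ | ⟨h, _⟩
    exacts [⟨_, h⟩, ⟨_, h⟩]
  obtain ⟨z1, hz1⟩ := hz1
  have hKne : (tsupport F).Nonempty := by
    refine ⟨z1, subset_tsupport F ?_⟩
    have := hFX1 z1 hz1
    simp only [Function.mem_support]
    intro h0; rw [h0] at this; linarith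
  obtain ⟨z0, hz0K, hz0max'⟩ :=
    hFc.exists_isMaxOn hKne (hBcont.abs.continuousOn)
  have hz0max : ∀ w ∈ tsupport F, |B w| ≤ |B z0| := fun w hw => hz0max' hw
  set C : ℝ := |B z0| with hCdef
  have hC0 : 0 ≤ C := abs_nonneg _
  -- Key claim: |B y| ≤ C for every y
  have claim : ∀ y, |B y| ≤ C := by
    intro y
    by_contra hy
    push_neg at hy
    have hyK : y ∉ tsupport F := fun h => absurd (hz0max y h) (not_le.mpr hy)
    have hFy : F y = 0 := image_eq_zero_of_notMem_tsupport hyK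
    set d : ℝ := B y with hd
    have hdC : C < |d| := hy
    have hderiv : ∀ t, HasDerivAt (fun τ => F (g τ y)) (B (g t y)) t := hgflow F hF y
    have hd0 : HasDerivAt (fun τ => F (g τ y)) d 0 := by
      have h := hderiv 0; rwa [hg0] at h
    set δ : ℝ := (|d| - C) / 4 with hδdef
    have hδpos : 0 < δ := by simp only [hδdef]; linarith
    have hlo := (hasDerivAt_iff_isLittleO.mp hd0).def hδpos
    simp only [hg0, hFy, sub_zero, smul_eq_mul] at hlo
    rw [Metric.eventually_nhds_iff] at hlo
    obtain ⟨ε, hεpos, hε⟩ := hlo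
    set t : ℝ := ε / 2 with ht
    have htpos : 0 < t := by positivity
    -- the little-o bound at any u with |u| ≤ t
    have hbound : ∀ u : ℝ, |u| ≤ t → |F (g u y) - u * d| ≤ δ * |u| := by
      intro u hu
      have : dist u 0 < ε := by
        rw [Real.dist_eq, sub_zero]
        calc |u| ≤ ε / 2 := hu
        _ < ε := by linarith
      simpa [Real.norm_eq_abs] using hε this
    -- lower bound: |F (g u y)| ≥ (|d| - δ) * |u|
    have hlow : ∀ u : ℝ, |u| ≤ t → (|d| - δ) * |u| ≤ |F (g u y)| := by
      intro u hu
      have h1 := hbound u hu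
      have h2 : |u * d| ≤ |F (g u y)| + |F (g u y) - u * d| := by
        have h3 := abs_add_le (F (g u y)) (u * d - F (g u y))
        have h4 : F (g u y) + (u * d - F (g u y)) = u * d := by ring
        rw [h4] at h3
        rwa [abs_sub_comm (u * d)] at h3
      have h3 : |u * d| = |d| * |u| := by rw [abs_mul, mul_comm]
      nlinarith [abs_nonneg u]
    -- on [t/2, t] the point g u y lies in tsupport F, hence |B (g u y)| ≤ C
    have hmem : ∀ u ∈ Icc (t/2) t, |B (g u y)| ≤ C := by
      intro u hu
      have hupos : 0 < u := lt_of_lt_of_le (by linarith [htpos]) hu.1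
      have huabs : |u| ≤ t := by rw [abs_of_pos hupos]; exact hu.2
      have hne : F (g u y) ≠ 0 := by
        have := hlow u huabs
        have h4 : 0 < (|d| - δ) * |u| := by
          apply mul_pos
          · simp only [hδdef]; linarith
          · exact abs_pos.mpr (ne_of_gt hupos)
        intro h0; rw [h0] at this; simp at this; linarith
      exact hz0max _ (subset_tsupport F hne)
    -- MVT bound on [t/2, t]
    have hmvt : |F (g t y) - F (g (t/2) y)| ≤ C * (t/2) := by
      have := Convex.norm_image_sub_le_of_norm_hasDerivWithin_le
        (f := fun τ => F (g τ y)) (f' := fun u => B (g u y)) (s := Icc (t/2) t)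
        (fun u hu => (hderiv u).hasDerivWithinAt)
        (fun u hu => by simpa [Real.norm_eq_abs] using hmem u hu)
        (convex_Icc _ _)
        (⟨le_refl _, by linarith⟩ : t/2 ∈ Icc (t/2) t)
        (⟨by linarith, le_refl _⟩ : t ∈ Icc (t/2) t)
      have h5 : (t : ℝ) - t/2 = t/2 := by ring
      rw [Real.norm_eq_abs, Real.norm_eq_abs, h5, abs_of_pos (by linarith : (0:ℝ) < t/2)] at this
      exact this
    -- lower bound on the same difference
    have hlow_t : (|d| - δ) * t ≤ |F (g t y)| := by
      have := hlow t (by rw [abs_of_pos htpos])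
      rwa [abs_of_pos htpos] at this
    have hup_half : |F (g (t/2) y)| ≤ (|d| + δ) * (t/2) := by
      have h1 := hbound (t/2) (by rw [abs_of_pos (by linarith : (0:ℝ) < t/2)]; linarith)
      have h2 : |F (g (t/2) y)| ≤ |t/2 * d| + |F (g (t/2) y) - t/2 * d| := by
        calc |F (g (t/2) y)| = |t/2 * d + (F (g (t/2) y) - t/2 * d)| := by ring_nf
        _ ≤ |t/2 * d| + |F (g (t/2) y) - t/2 * d| := abs_add_le _ _
      have h3 : |t/2 * d| = |d| * (t/2) := by
        rw [abs_mul, abs_of_pos (by linarith : (0:ℝ) < t/2), mul_comm]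
      have h4 : |(t:ℝ)/2| = t/2 := abs_of_pos (by linarith)
      rw [h4] at h1
      linarith
    have hdiff : |F (g t y)| - |F (g (t/2) y)| ≤ |F (g t y) - F (g (t/2) y)| :=
      abs_sub_abs_le_abs_sub _ _
    -- combine everything
    have : (|d| - 3*δ) * (t/2) ≤ C * (t/2) := by nlinarith
    have hfin : |d| - 3*δ ≤ C := le_of_mul_le_mul_right (by linarith [this]) (by linarith : (0:ℝ) < t/2)
    simp only [hδdef] at hfin
    linarith
  -- mean value theorem on the chord
  have hderiv : ∀ t, HasDerivAt (fun τ => F (g τ x)) (B (g t x)) t := hgflow F hF x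
  have hcont : ∀ a b : ℝ, ContinuousOn (fun τ => F (g τ x)) (Icc a b) :=
    fun a b u _ => (hderiv u).continuousAt.continuousWithinAt
  have hgap : 1 ≤ |F (g T x) - F x| := by
    rcases hchord with ⟨hx0, hx1⟩ | ⟨hx1, hx0⟩
    · have h1 := hFX0 x hx0
      have h2 := hFX1 _ hx1
      rw [abs_of_nonneg (by linarith)]; linarith
    · have h1 := hFX1 x hx1
      have h2 := hFX0 _ hx0
      rw [abs_of_nonpos (by linarith)]; linarith
  -- get a point where |B| ≥ 1/|T|
  have hpoint : ∃ z : M, 1 / |T| ≤ |B z| := by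
    rcases lt_or_gt_of_ne hT with hTneg | hTpos
    · obtain ⟨c, _, hc⟩ := exists_hasDerivAt_eq_slope (fun τ => F (g τ x))
        (fun u => B (g u x)) hTneg (hcont T 0) (fun u _ => hderiv u)
      refine ⟨g c x, ?_⟩
      rw [hc, hg0]
      rw [abs_div]
      rw [div_le_div_iff₀ (abs_pos.mpr hT) (by rw [abs_sub_comm]; exact abs_pos.mpr (sub_ne_zero.mpr hT))]
      have h0T : |0 - T| = |T| := by rw [zero_sub, abs_neg]
      rw [h0T]
      have : 1 ≤ |F x - F (g T x)| := by rwa [abs_sub_comm]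
      nlinarith [abs_nonneg (F x - F (g T x)), abs_pos.mpr hT]
    · obtain ⟨c, _, hc⟩ := exists_hasDerivAt_eq_slope (fun τ => F (g τ x))
        (fun u => B (g u x)) hTpos (hcont 0 T) (fun u _ => hderiv u)
      refine ⟨g c x, ?_⟩
      rw [hc, hg0]
      rw [abs_div]
      rw [div_le_div_iff₀ (abs_pos.mpr hT) (by rw [sub_zero]; exact abs_pos.mpr hT)]
      rw [sub_zero]
      nlinarith [hgap, abs_pos.mpr hT]
  obtain ⟨z, hz⟩ := hpoint
  have hbdd : BddAbove (Set.range fun w => |B w|) := by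
    refine ⟨C, ?_⟩
    rintro _ ⟨w, rfl⟩
    exact claim w
  calc 1 / |T| ≤ |B z| := hz
  _ ≤ ⨆ w, |B w| := le_ciSup hbdd z
  _ = supNorm B := rfl
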